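/- Let R → S be a flat Ohm-Rush algebra and W ⊆ R a multiplicative set consisting of regular elements (non-zero-divisors). If R → S is McCoy, then W⁻¹R → W⁻¹S is McCoy. -/

import Mathlib

/-- The Ohm-Rush content of `f ∈ S`: the intersection of all ideals `I` of `R`
with `f ∈ IS`. -/
def orContent (R : Type*) [CommRing R] {S : Type*} [CommRing S] [Algebra R S] (f : S) :
    Ideal R :=
  sInf {I : Ideal R | f ∈ I.map (algebraMap R S)}

/-- `S` is an Ohm-Rush `R`-algebra if each `f ∈ S` lies in `c(f)S`,
i.e. there is a minimal ideal `I` with `f ∈ IS`. -/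
def IsOhmRush (R S : Type*) [CommRing R] [CommRing S] [Algebra R S] : Prop :=
  ∀ f : S, f ∈ (orContent R f).map (algebraMap R S)

/-- `S` is a McCoy `R`-algebra if whenever `f * g = 0` with `g ≠ 0`,
some nonzero `r ∈ R` annihilates the content of `f`. -/
def IsMcCoy (R S : Type*) [CommRing R] [CommRing S] [Algebra R S] : Prop :=
  ∀ f g : S, f * g = 0 → g ≠ 0 → ∃ r : R, r ≠ 0 ∧ ∀ a ∈ orContent R f, r * a = 0

/-- `S` is a weak content `R`-algebra: Ohm-Rush and `rad c(fg) = rad (c(f)c(g))`. -/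
def IsWeakContent (R S : Type*) [CommRing R] [CommRing S] [Algebra R S] : Prop :=
  IsOhmRush R S ∧ ∀ f g : S,
    (orContent R (f * g)).radical = (orContent R f * orContent R g).radical

/-- Property (A): every finitely generated ideal consisting of zero-divisors
has a nonzero annihilator. -/
def HasPropertyA (R : Type*) [CommRing R] : Prop :=
  ∀ J : Ideal R, J.FG → (∀ a ∈ J, a ∉ nonZeroDivisors R) →
    ∃ r : R, r ≠ 0 ∧ ∀ a ∈ J, a * r = 0

/-- Fidel (A): every quotient has property (A). -/
def HasFidelA (R : Type*) [CommRing R] : Prop :=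
  ∀ I : Ideal R, HasPropertyA (R ⧸ I)

/-- `S` is a semicontent `R`-algebra: faithfully flat, Ohm-Rush, and for every
multiplicative set `W ⊆ R` meeting `c(f)`, `c(fg)` and `c(g)` agree after
localizing at `W`. -/
def IsSemicontent (R S : Type*) [CommRing R] [CommRing S] [Algebra R S] : Prop :=
  Module.FaithfullyFlat R S ∧ IsOhmRush R S ∧
    ∀ (W : Submonoid R) (f g : S), (∃ w ∈ W, w ∈ orContent R f) →
      (orContent R (f * g)).map (algebraMap R (Localization W)) =
        (orContent R g).map (algebraMap R (Localization W))

/-- If `R → S` is a flat Ohm-Rush algebra, `W ⊆ R` a multiplicative set of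
regular elements, and `R → S` is McCoy, then `W⁻¹R → W⁻¹S` is McCoy. -/
theorem stmt_6 (R S : Type*) [CommRing R] [CommRing S] [Algebra R S]
    [Module.Flat R S] (hOR : IsOhmRush R S)
    (W : Submonoid R) (hW : W ≤ nonZeroDivisors R)
    (hMc : IsMcCoy R S) :
    letI := localizationAlgebra W S (Rₘ := Localization W)
      (Sₘ := Localization (Algebra.algebraMapSubmonoid S W))
    IsMcCoy (Localization W) (Localization (Algebra.algebraMapSubmonoid S W)) := by
  letI := localizationAlgebra W S (Rₘ := Localization W)
    (Sₘ := Localization (Algebra.algebraMapSubmonoid S W))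
  intro f' g' hfg hg
  obtain ⟨⟨f, wf⟩, hf⟩ := IsLocalization.surj (Algebra.algebraMapSubmonoid S W) f'
  obtain ⟨⟨g, wg⟩, hgrep⟩ := IsLocalization.surj (Algebra.algebraMapSubmonoid S W) g'
  dsimp only at hf hgrep
  have hfgS : algebraMap S (Localization (Algebra.algebraMapSubmonoid S W)) (f * g) = 0 := by
    rw [map_mul, ← hf, ← hgrep,
      show f' * algebraMap S (Localization (Algebra.algebraMapSubmonoid S W)) ↑wf *
          (g' * algebraMap S (Localization (Algebra.algebraMapSubmonoid S W)) ↑wg) =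
        f' * g' * (algebraMap S (Localization (Algebra.algebraMapSubmonoid S W)) ↑wf *
          algebraMap S (Localization (Algebra.algebraMapSubmonoid S W)) ↑wg) from by ring,
      hfg, zero_mul]
  obtain ⟨m, hm⟩ := (IsLocalization.map_eq_zero_iff (Algebra.algebraMapSubmonoid S W)
    (Localization (Algebra.algebraMapSubmonoid S W)) _).mp hfgS
  have hg1 : f * ((m : S) * g) = 0 := by rw [← hm]; ring
  have hmg : (m : S) * g ≠ 0 := by
    intro h0
    apply hg
    have h1 : algebraMap S (Localization (Algebra.algebraMapSubmonoid S W)) ((m : S) * g) = 0 := by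
      rw [h0, map_zero]
    rw [map_mul] at h1
    have hu1 : IsUnit (algebraMap S (Localization (Algebra.algebraMapSubmonoid S W)) (m : S)) :=
      IsLocalization.map_units _ m
    have hu2 : IsUnit (algebraMap S (Localization (Algebra.algebraMapSubmonoid S W)) (wg : S)) :=
      IsLocalization.map_units _ wg
    have h3 : algebraMap S (Localization (Algebra.algebraMapSubmonoid S W)) g = 0 :=
      hu1.mul_right_eq_zero.mp h1
    have h4 : g' * algebraMap S (Localization (Algebra.algebraMapSubmonoid S W)) ↑wg = 0 := by
      rw [hgrep, h3]
    exact hu2.mul_left_eq_zero.mp h4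
  obtain ⟨r, hr0, hr⟩ := hMc f ((m : S) * g) hg1 hmg
  refine ⟨algebraMap R (Localization W) r, ?_, ?_⟩
  · intro h0
    obtain ⟨w, hw⟩ := (IsLocalization.map_eq_zero_iff W (Localization W) r).mp h0
    exact hr0 ((hW w.2).2 r (by rwa [mul_comm] at hw))
  · have hcomp : (algebraMap (Localization W) (Localization (Algebra.algebraMapSubmonoid S W))).comp
        (algebraMap R (Localization W)) =
        (algebraMap S (Localization (Algebra.algebraMapSubmonoid S W))).comp (algebraMap R S) :=
      by
      have hmapeq : algebraMap (Localization W) (Localization (Algebra.algebraMapSubmonoid S W)) =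
          IsLocalization.map (Localization (Algebra.algebraMapSubmonoid S W)) (algebraMap R S)
            (show W ≤ (Algebra.algebraMapSubmonoid S W).comap (algebraMap R S)
              from W.le_comap_map) := rfl
      rw [hmapeq]
      exact IsLocalization.map_comp _
    have hsub : orContent (Localization W) f' ≤
        (orContent R f).map (algebraMap R (Localization W)) := by
      apply sInf_le
      show f' ∈ Ideal.map (algebraMap (Localization W)
        (Localization (Algebra.algebraMapSubmonoid S W))) _
      rw [Ideal.map_map, hcomp, ← Ideal.map_map]
      have hfmem : algebraMap S (Localization (Algebra.algebraMapSubmonoid S W)) f ∈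
          Ideal.map (algebraMap S (Localization (Algebra.algebraMapSubmonoid S W)))
          ((orContent R f).map (algebraMap R S)) :=
        Ideal.mem_map_of_mem _ (hOR f)
      obtain ⟨u, hu⟩ := IsLocalization.map_units
        (Localization (Algebra.algebraMapSubmonoid S W)) wf
      have hfeq : f' = algebraMap S (Localization (Algebra.algebraMapSubmonoid S W)) f *
          (↑u⁻¹ : Localization (Algebra.algebraMapSubmonoid S W)) := by
        rw [← hf, ← hu, mul_assoc, Units.mul_inv, mul_one]
      rw [hfeq]
      exact Ideal.mul_mem_right _ _ hfmem
    intro a ha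
    refine Submodule.span_induction ?_ ?_ ?_ ?_ (hsub ha)
    · rintro x ⟨b, hb, rfl⟩
      rw [← map_mul, hr b hb, map_zero]
    · rw [mul_zero]
    · intro x y _ _ hx hy; rw [mul_add, hx, hy, add_zero]
    · intro c x _ hx
      rw [smul_eq_mul, mul_left_comm, hx, mul_zero]
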